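/- The fourfold integral ∫₀^τ ds ∫_{-τ}^0 ds' ∫₀^τ dt' ∫_{-τ}^0 dt of exp(-(ℓ/2)(|s-t|+|s'-t'|+|s-t'|+|t-s'|-|s-s'|-|t-t'|)) equals (16/ℓ⁴) e^{-ℓτ} (e^{ℓτ/2}(ℓτ - 2) + 2)². -/

import Mathlib

open intervalIntegral Real Set

lemma exp_lin_deriv (a c x : ℝ) (ha : a ≠ 0) :
    HasDerivAt (fun x : ℝ => Real.exp (a * x + c) / a) (Real.exp (a * x + c)) x := by
  have h := ((((hasDerivAt_id x).const_mul a).add_const c).exp).div_const a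
  exact h.congr_deriv (by simp [ha])

lemma int_exp_lin (a c u v : ℝ) (ha : a ≠ 0) :
    ∫ x in u..v, Real.exp (a * x + c) =
      Real.exp (a * v + c) / a - Real.exp (a * u + c) / a := by
  exact intervalIntegral.integral_eq_sub_of_hasDerivAt
    (fun x _ => exp_lin_deriv a c x ha)
    ((by fun_prop : Continuous fun x => Real.exp (a * x + c)).intervalIntegrable u v)

lemma int_exp_abs (a τ : ℝ) (ha : 0 < a) {y : ℝ} (hy : y ∈ Set.Icc 0 τ) :
    ∫ x in (0:ℝ)..τ, Real.exp (-(a * |x - y|)) =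
      (2 - Real.exp (-(a * y)) - Real.exp (-(a * (τ - y)))) / a := by
  obtain ⟨hy0, hyτ⟩ := hy
  have hcont : Continuous fun x : ℝ => Real.exp (-(a * |x - y|)) := by fun_prop
  rw [← intervalIntegral.integral_add_adjacent_intervals (a := (0:ℝ)) (b := y) (c := τ)
    (hcont.intervalIntegrable _ _) (hcont.intervalIntegrable _ _)]
  have h1 : (∫ x in (0:ℝ)..y, Real.exp (-(a * |x - y|)))
      = Real.exp (a * y + (-(a*y))) / a - Real.exp (a * 0 + (-(a*y))) / a := by
    rw [intervalIntegral.integral_congr (g := fun x => Real.exp (a * x + (-(a*y))))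
      (fun x hx => by
        rw [Set.uIcc_of_le hy0] at hx
        rw [abs_of_nonpos (by linarith [hx.2])]
        ring_nf)]
    exact int_exp_lin a _ 0 y (ne_of_gt ha)
  have h2 : (∫ x in y..τ, Real.exp (-(a * |x - y|)))
      = Real.exp (-a * τ + a*y) / (-a) - Real.exp (-a * y + a*y) / (-a) := by
    rw [intervalIntegral.integral_congr (g := fun x => Real.exp (-a * x + a*y))
      (fun x hx => by
        rw [Set.uIcc_of_le hyτ] at hx
        rw [abs_of_nonneg (by linarith [hx.1])]
        ring_nf)]
    exact int_exp_lin (-a) _ y τ (by simpa using (ne_of_gt ha))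
  rw [h1, h2]
  have e1 : a * y + -(a*y) = 0 := by ring
  have e2 : a * 0 + -(a*y) = -(a*y) := by ring
  have e3 : -a * τ + a*y = -(a*(τ - y)) := by ring
  have e4 : -a * y + a*y = 0 := by ring
  rw [e1, e2, e3, e4, Real.exp_zero]
  generalize Real.exp (-(a * y)) = E
  generalize Real.exp (-(a * (τ - y))) = F
  simp only [div_neg]
  ring

lemma double_int (a τ : ℝ) (ha : 0 < a) (hτ : 0 ≤ τ) :
    ∫ y in (0:ℝ)..τ, ∫ x in (0:ℝ)..τ, Real.exp (-(a * |x - y|)) =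
      2 * (a * τ - 1 + Real.exp (-(a * τ))) / a ^ 2 := by
  rw [intervalIntegral.integral_congr
    (g := fun y => (2 - Real.exp (-(a * y)) - Real.exp (-(a * (τ - y)))) / a)
    (fun y hy => by
      rw [Set.uIcc_of_le hτ] at hy
      exact int_exp_abs a τ ha hy)]
  have hderiv : ∀ y ∈ Set.uIcc (0:ℝ) τ, HasDerivAt
      (fun y => (2 * y + Real.exp (-(a * y)) / a - Real.exp (-(a * (τ - y))) / a) / a)
      ((2 - Real.exp (-(a * y)) - Real.exp (-(a * (τ - y)))) / a) y := by
    intro y _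
    have d1 : HasDerivAt (fun y : ℝ => Real.exp (-(a * y))) (-a * Real.exp (-(a * y))) y := by
      have := (((hasDerivAt_id y).const_mul a).neg).exp
      convert this using 1 <;> · simp only [id_eq, Pi.neg_apply] <;> ring_nf
    have d2 : HasDerivAt (fun y : ℝ => Real.exp (-(a * (τ - y))))
        (a * Real.exp (-(a * (τ - y)))) y := by
      have := ((((hasDerivAt_id y).const_sub τ).const_mul a).neg).exp
      convert this using 1 <;> · simp only [id_eq, Pi.neg_apply] <;> ring_nf
    have := ((((hasDerivAt_id y).const_mul 2).add (d1.div_const a)).sub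
      (d2.div_const a)).div_const a
    refine this.congr_deriv ?_
    field_simp
    ring
  rw [intervalIntegral.integral_eq_sub_of_hasDerivAt hderiv
    ((by fun_prop : Continuous fun y =>
      (2 - Real.exp (-(a * y)) - Real.exp (-(a * (τ - y)))) / a).intervalIntegrable 0 τ)]
  have : τ - 0 = τ := by ring
  simp only [mul_zero, neg_zero, Real.exp_zero, sub_zero, this, sub_self]
  field_simp
  ring

/-- The fourfold integral of the ideal second-order Glauber coherence function:
`∫₀^τ ds ∫_{-τ}^0 ds' ∫₀^τ dt' ∫_{-τ}^0 dt g⁽²⁾_ideal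
  = (16/ℓ⁴) e^{-ℓτ} (e^{ℓτ/2}(ℓτ - 2) + 2)²`. -/
theorem fourfold_integral_g2_mixed (ℓ τ : ℝ) (hℓ : 0 < ℓ) (hτ : 0 < τ) :
    (∫ s in (0:ℝ)..τ, ∫ s' in (-τ)..(0:ℝ), ∫ t' in (0:ℝ)..τ, ∫ t in (-τ)..(0:ℝ),
        Real.exp (-(ℓ / 2) *
          (|s - t| + |s' - t'| + |s - t'| + |t - s'| - |s - s'| - |t - t'|))) =
      (16 / ℓ ^ 4) * Real.exp (-(ℓ * τ)) *
        (Real.exp (ℓ * τ / 2) * (ℓ * τ - 2) + 2) ^ 2 := by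
  set a : ℝ := ℓ / 2 with ha_def
  have ha : 0 < a := by positivity
  have hτ' : -τ ≤ 0 := by linarith
  -- Step 1: simplify the integrand pointwise on the domain
  have step1 : (∫ s in (0:ℝ)..τ, ∫ s' in (-τ)..(0:ℝ), ∫ t' in (0:ℝ)..τ, ∫ t in (-τ)..(0:ℝ),
        Real.exp (-(ℓ / 2) *
          (|s - t| + |s' - t'| + |s - t'| + |t - s'| - |s - s'| - |t - t'|))) =
      ∫ s in (0:ℝ)..τ, ∫ s' in (-τ)..(0:ℝ), ∫ t' in (0:ℝ)..τ, ∫ t in (-τ)..(0:ℝ),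
        Real.exp (-(a * |t' - s|)) * Real.exp (-(a * |t - s'|)) := by
    refine intervalIntegral.integral_congr fun s hs => ?_
    rw [Set.uIcc_of_le hτ.le] at hs
    refine intervalIntegral.integral_congr fun s' hs' => ?_
    rw [Set.uIcc_of_le hτ'] at hs'
    refine intervalIntegral.integral_congr fun t' ht' => ?_
    rw [Set.uIcc_of_le hτ.le] at ht'
    refine intervalIntegral.integral_congr fun t ht => ?_
    rw [Set.uIcc_of_le hτ'] at ht
    rw [abs_of_nonneg (by linarith [hs.1, ht.2] : (0:ℝ) ≤ s - t),
      abs_of_nonpos (by linarith [hs'.2, ht'.1] : s' - t' ≤ 0),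
      abs_of_nonneg (by linarith [hs.1, hs'.2] : (0:ℝ) ≤ s - s'),
      abs_of_nonpos (by linarith [ht.2, ht'.1] : t - t' ≤ 0),
      abs_sub_comm s t', ← Real.exp_add]
    congr 1
    ring
  rw [step1]
  simp_rw [intervalIntegral.integral_const_mul, intervalIntegral.integral_mul_const]
  -- now of the form D * C
  have shift1 : ∀ y : ℝ, (∫ t in (-τ)..(0:ℝ), Real.exp (-(a * |t - y|)))
      = ∫ x in (0:ℝ)..τ, Real.exp (-(a * |x - (y + τ)|)) := by
    intro y
    have := intervalIntegral.integral_comp_sub_right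
      (f := fun t => Real.exp (-(a * |t - y|))) (a := (0:ℝ)) (b := τ) τ
    simp only [zero_sub, sub_self] at this
    rw [← this]
    refine intervalIntegral.integral_congr fun x _ => ?_
    have hxx : x - τ - y = x - (y + τ) := by ring
    rw [hxx]
  have shift2 : (∫ s' in (-τ)..(0:ℝ), ∫ x in (0:ℝ)..τ, Real.exp (-(a * |x - (s' + τ)|)))
      = ∫ y in (0:ℝ)..τ, ∫ x in (0:ℝ)..τ, Real.exp (-(a * |x - y|)) := by
    have := intervalIntegral.integral_comp_add_right
      (f := fun y => ∫ x in (0:ℝ)..τ, Real.exp (-(a * |x - y|))) (a := -τ) (b := (0:ℝ)) τ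
    rw [this]
    norm_num
  simp_rw [shift1]
  simp_rw [intervalIntegral.integral_const_mul, intervalIntegral.integral_mul_const]
  rw [shift2, double_int a τ ha hτ.le]
  -- final algebra
  set u : ℝ := Real.exp (ℓ * τ / 2) with hu_def
  have hu : 0 < u := Real.exp_pos _
  have h1 : Real.exp (-(a * τ)) = u⁻¹ := by
    rw [Real.exp_neg, hu_def]
    congr 2
    rw [ha_def]; ring
  have h2 : Real.exp (-(ℓ * τ)) = (u * u)⁻¹ := by
    rw [Real.exp_neg, hu_def, ← Real.exp_add]
    congr 2
    ring
  rw [h1, h2, ha_def]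
  have hℓ' : ℓ ≠ 0 := ne_of_gt hℓ
  field_simp
  ring
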